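/- If A + A* is positive definite for A ∈ ℂ^{m×m}, then SG(A) ⊂ { z ∈ ℂ : Re z > 0 }, the open right half-plane. -/

import Mathlib

open Matrix Complex
open scoped ComplexOrder

/-- Euclidean norm of a complex vector. -/
noncomputable def enorm' {m : ℕ} (x : Fin m → ℂ) : ℝ :=
  Real.sqrt (∑ i, Complex.normSq (x i))

/-- Real inner product Re(x* y). -/
noncomputable def rinner {m : ℕ} (x y : Fin m → ℂ) : ℝ :=
  (∑ i, (starRingEnd ℂ) (x i) * y i).re

/-- The gain γ(x, y) = ‖y‖₂ / ‖x‖₂. -/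
noncomputable def gain {m : ℕ} (x y : Fin m → ℂ) : ℝ := enorm' y / enorm' x

/-- The phase θ(x, y) = arccos(Re(x* y)/(‖x‖₂‖y‖₂)) ∈ [0, π]. -/
noncomputable def phase {m : ℕ} (x y : Fin m → ℂ) : ℝ :=
  Real.arccos (rinner x y / (enorm' x * enorm' y))

/-- The point γ(x,y)·e^{iθ(x,y)}. -/
noncomputable def sgPoint {m : ℕ} (x y : Fin m → ℂ) : ℂ :=
  (gain x y : ℂ) * Complex.exp (Complex.I * (phase x y : ℂ))

/-- The scaled graph SG(A). -/
noncomputable def SG {m : ℕ} (A : Matrix (Fin m) (Fin m) ℂ) : Set ℂ :=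
  {z | ∃ x : Fin m → ℂ, x ≠ 0 ∧ A.mulVec x ≠ 0 ∧
      (z = sgPoint x (A.mulVec x) ∨ z = (starRingEnd ℂ) (sgPoint x (A.mulVec x)))}

/-- The inverse scaled graph SG†(B). -/
noncomputable def SGdag {m : ℕ} (B : Matrix (Fin m) (Fin m) ℂ) : Set ℂ :=
  {z | ∃ x : Fin m → ℂ, x ≠ 0 ∧ B.mulVec x ≠ 0 ∧
      (z = sgPoint (B.mulVec x) x ∨ z = (starRingEnd ℂ) (sgPoint (B.mulVec x) x))}


lemma enorm'_pos {m : ℕ} {x : Fin m → ℂ} (hx : x ≠ 0) : 0 < enorm' x := by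
  rw [enorm', Real.sqrt_pos]
  obtain ⟨i, hi⟩ : ∃ i, x i ≠ 0 := by
    by_contra h; push_neg at h; exact hx (funext h)
  exact Finset.sum_pos' (fun j _ => Complex.normSq_nonneg _)
    ⟨i, Finset.mem_univ i, Complex.normSq_pos.2 hi⟩

lemma rinner_pos {m : ℕ} (A : Matrix (Fin m) (Fin m) ℂ)
    (hA : (A + Aᴴ).PosDef) (x : Fin m → ℂ) (hx : x ≠ 0) :
    0 < rinner x (A.mulVec x) := by
  have h := hA.dotProduct_mulVec_pos hx
  rw [Complex.lt_def] at h
  have h1 := h.1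
  have key : star x ⬝ᵥ (A + Aᴴ) *ᵥ x
      = star x ⬝ᵥ A *ᵥ x + star (star x ⬝ᵥ A *ᵥ x) := by
    rw [Matrix.add_mulVec, dotProduct_add]
    have : star (star x ⬝ᵥ A *ᵥ x) = star x ⬝ᵥ Aᴴ *ᵥ x := by
      rw [star_dotProduct, star_star, Matrix.star_mulVec, Matrix.dotProduct_mulVec]
    rw [this]
  rw [key] at h1
  simp only [Complex.add_re, Complex.zero_re, Complex.star_def, Complex.conj_re] at h1
  have : 0 < (star x ⬝ᵥ A *ᵥ x).re := by linarith
  simpa [rinner, dotProduct] using this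

theorem sg_subset_open_rhp {m : ℕ} (A : Matrix (Fin m) (Fin m) ℂ)
    (hA : (A + Aᴴ).PosDef) :
    SG A ⊆ {z : ℂ | 0 < z.re} := by
  rintro z ⟨x, hx, hAx, hz⟩
  set y := A.mulVec x with hy
  have hex := enorm'_pos hx
  have hey := enorm'_pos hAx
  have hr : 0 < rinner x y := rinner_pos A hA x hx
  have hrpos : 0 < rinner x y / (enorm' x * enorm' y) :=
    div_pos hr (mul_pos hex hey)
  have hθlt : phase x y < Real.pi / 2 := by
    rw [phase]; exact Real.arccos_lt_pi_div_two.2 hrpos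
  have hθge : 0 ≤ phase x y := Real.arccos_nonneg _
  have hcos : 0 < Real.cos (phase x y) :=
    Real.cos_pos_of_mem_Ioo ⟨by linarith [Real.pi_pos], hθlt⟩
  have hre : (sgPoint x y).re = gain x y * Real.cos (phase x y) := by
    rw [sgPoint, mul_comm Complex.I]
    simp [Complex.exp_ofReal_mul_I_re]
  have hg : 0 < gain x y := div_pos hey hex
  have hpos := mul_pos hg hcos
  rcases hz with h | h <;>
    simp only [Set.mem_setOf_eq, h, Complex.conj_re, hre] <;> exact hpos
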